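/- Let C be a monoidal category satisfying conditions (I)–(IV) (right rigid, Krull–Schmidt, k := C(𝟙,𝟙) a field, all hom-spaces finitely generated over k), with k algebraically closed. If there exists X ∈ 𝓑 = { X ∈ inde C | C(𝟙,X) ≠ 0 } with dim_k C(𝟙,X) > 1, then the decategorification map Ob : TId(C) → Id([C]_⊕) is not an isomorphism. -/
import Mathlib


open CategoryTheory CategoryTheory.Limits CategoryTheory.MonoidalCategory

namespace TIP

attribute [local instance] CategoryTheory.Limits.hasBinaryBiproducts_of_finite_biproducts

universe v u v₂ u₂

section DirectSummand

variable {C : Type u} [Category.{v} C]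

/-- `X` is a direct summand of `Y` (i.e. `X` is a retract of `Y`). -/
def IsDirectSummand (X Y : C) : Prop := ∃ (i : X ⟶ Y) (r : Y ⟶ X), i ≫ r = 𝟙 X

end DirectSummand

section Submod

variable {C : Type u} [Category.{v} C] [Preadditive C]

/-- A subfunctor (submodule) of the representable module `P_Z = C(Z, -)`. -/
structure Submod (Z : C) where
  carrier : ∀ X : C, AddSubgroup (Z ⟶ X)
  map_mem : ∀ {X Y : C} (f : X ⟶ Y) {φ : Z ⟶ X}, φ ∈ carrier X → φ ≫ f ∈ carrier Y

theorem Submod.ext' {Z : C} {M N : Submod Z} (h : M.carrier = N.carrier) : M = N := by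
  cases M; cases N; cases h; rfl

instance {Z : C} : PartialOrder (Submod Z) where
  le M N := ∀ X : C, M.carrier X ≤ N.carrier X
  le_refl M X := le_rfl
  le_trans M N P h h' X := (h X).trans (h' X)
  le_antisymm M N h h' := Submod.ext' (funext fun X => le_antisymm (h X) (h' X))

/-- Post-composition with a fixed morphism, as an additive map. -/
def postcompHom (Z : C) {X Y : C} (f : X ⟶ Y) : (Z ⟶ X) →+ (Z ⟶ Y) where
  toFun g := g ≫ f
  map_zero' := Limits.zero_comp
  map_add' a b := Preadditive.add_comp _ _ _ _ _ _

/-- The trace submodule `Tr_S P_Z` of the representable module `P_Z`, for a class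
of objects `S`. -/
def traceSub (Z : C) (S : Set C) : Submod Z where
  carrier Y := AddSubgroup.closure {h : Z ⟶ Y | ∃ W ∈ S, ∃ (b : Z ⟶ W) (a : W ⟶ Y), h = b ≫ a}
  map_mem := by
    intro X Y f φ hφ
    have h1 : postcompHom Z f φ ∈ (AddSubgroup.closure
        {h : Z ⟶ X | ∃ W ∈ S, ∃ (b : Z ⟶ W) (a : W ⟶ X), h = b ≫ a}).map (postcompHom Z f) :=
      AddSubgroup.mem_map_of_mem _ hφ
    rw [AddMonoidHom.map_closure] at h1
    refine AddSubgroup.closure_mono ?_ h1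
    rintro x ⟨h, ⟨W, hW, b, a, rfl⟩, rfl⟩
    exact ⟨W, hW, b, a ≫ f, by simp [postcompHom]⟩

/-- The action of the endomorphism ring `C(X,X)` on `C(Z,X)` by post-composition. -/
instance endSMul {Z X : C} : SMul (End X) (Z ⟶ X) := ⟨fun e φ => φ ≫ e⟩

theorem end_smul_def {Z X : C} (e : End X) (φ : Z ⟶ X) : e • φ = φ ≫ e := rfl

/-- `C(Z,X)` is a left module over the endomorphism ring `C(X,X)`. -/
instance endModule {Z X : C} : Module (End X) (Z ⟶ X) where
  one_smul φ := by simp [end_smul_def, End.one_def]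
  mul_smul e f φ := by simp [end_smul_def, End.mul_def]
  smul_zero e := by simp [end_smul_def]
  smul_add e φ ψ := Preadditive.add_comp _ _ _ _ _ _
  add_smul e f φ := Preadditive.comp_add _ _ _ _ _ _
  zero_smul φ := by simp [end_smul_def]

end Submod

section KS

variable {C : Type u} [Category.{v} C] [Preadditive C] [HasBinaryBiproducts C]

/-- An object of an additive category is indecomposable if it is nonzero and
any decomposition as a biproduct has a zero summand. -/
def Indecomposable (X : C) : Prop :=
  ¬ IsZero X ∧ ∀ Y Z : C, Nonempty (X ≅ Y ⊞ Z) → IsZero Y ∨ IsZero Z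

end KS

section KS2

variable (C : Type u) [Category.{v} C] [Preadditive C] [HasFiniteBiproducts C]

/-- A Krull-Schmidt category: every object is a finite biproduct of indecomposable
objects, and indecomposable objects have local endomorphism rings. -/
structure IsKrullSchmidt : Prop where
  local_end : ∀ X : C, Indecomposable X → IsLocalRing (End X)
  decomp : ∀ X : C, ∃ (n : ℕ) (f : Fin n → C),
    (∀ i, Indecomposable (f i)) ∧ Nonempty (X ≅ ⨁ f)

end KS2

section Monoidal

variable {C : Type u} [Category.{v} C] [MonoidalCategory C]

/-- A right dual `(X^∨, ev_X, co_X)` of an object `X`, with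
`ev_X : X ⊗ X^∨ ⟶ 𝟙` and `co_X : 𝟙 ⟶ X^∨ ⊗ X` satisfying the zigzag identities. -/
structure RightDual (X : C) where
  dual : C
  ev : X ⊗ dual ⟶ 𝟙_ C
  coev : 𝟙_ C ⟶ dual ⊗ X
  zigzag₁ : (ρ_ X).inv ≫ (X ◁ coev) ≫ (α_ X dual X).inv ≫ (ev ▷ X) ≫ (λ_ X).hom = 𝟙 X
  zigzag₂ : (λ_ dual).inv ≫ (coev ▷ dual) ≫ (α_ dual X dual).hom ≫ (dual ◁ ev) ≫ (ρ_ dual).hom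
      = 𝟙 dual

/-- The map `ι_{XY} : C(𝟙, X^∨ ⊗ Y) → C(X, Y)`, `φ ↦ (ev_X ⊗ 1_Y) ∘ (1_X ⊗ φ)`,
defined in terms of the raw data of a dual object and an evaluation morphism. -/
def iotaRaw {X : C} (Xd : C) (ev : X ⊗ Xd ⟶ 𝟙_ C) {Y : C} (φ : 𝟙_ C ⟶ Xd ⊗ Y) : X ⟶ Y :=
  (ρ_ X).inv ≫ (X ◁ φ) ≫ (α_ X Xd Y).inv ≫ (ev ▷ Y) ≫ (λ_ Y).hom

/-- The isomorphism `ι_{XY} : C(𝟙, X^∨ ⊗ Y) → C(X, Y)`, `φ ↦ (ev_X ⊗ 1_Y) ∘ (1_X ⊗ φ)`. -/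
def iota {X : C} (D : RightDual X) {Y : C} (φ : 𝟙_ C ⟶ D.dual ⊗ Y) : X ⟶ Y :=
  iotaRaw D.dual D.ev φ

/-- The inverse of `ι_{XY}`, given by `f ↦ (1_{X^∨} ⊗ f) ∘ co_X`. -/
def iotaInv {X : C} (D : RightDual X) {Y : C} (f : X ⟶ Y) : 𝟙_ C ⟶ D.dual ⊗ Y :=
  D.coev ≫ (D.dual ◁ f)

end Monoidal

section TId

variable (C : Type u) [Category.{v} C] [Preadditive C] [MonoidalCategory C]

/-- A left-tensor ideal in a preadditive monoidal category. -/
structure TensorIdeal where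
  carrier : ∀ X Y : C, AddSubgroup (X ⟶ Y)
  comp_pre : ∀ {W X Y : C} (g : W ⟶ X) {f : X ⟶ Y}, f ∈ carrier X Y → g ≫ f ∈ carrier W Y
  comp_post : ∀ {X Y Z : C} {f : X ⟶ Y} (h : Y ⟶ Z), f ∈ carrier X Y → f ≫ h ∈ carrier X Z
  whisker_mem : ∀ (Z : C) {X Y : C} {f : X ⟶ Y}, f ∈ carrier X Y →
    Z ◁ f ∈ carrier (Z ⊗ X) (Z ⊗ Y)

variable {C}

theorem TensorIdeal.ext' {J K : TensorIdeal C} (h : J.carrier = K.carrier) : J = K := by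
  cases J; cases K; cases h; rfl

instance : PartialOrder (TensorIdeal C) where
  le J K := ∀ X Y : C, J.carrier X Y ≤ K.carrier X Y
  le_refl J X Y := le_rfl
  le_trans J K L h h' X Y := (h X Y).trans (h' X Y)
  le_antisymm J K h h' :=
    TensorIdeal.ext' (funext fun X => funext fun Y => le_antisymm (h X Y) (h' X Y))

variable (C)

/-- The tensor ideal of all morphisms. -/
def TensorIdeal.top : TensorIdeal C where
  carrier _ _ := ⊤
  comp_pre := by intros; exact AddSubgroup.mem_top _
  comp_post := by intros; exact AddSubgroup.mem_top _
  whisker_mem := by intros; exact AddSubgroup.mem_top _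

variable {C}

/-- `Ψ` maps a tensor ideal `J` to the subfunctor `J(𝟙, -)` of the principal module
`P_𝟙 = C(𝟙, -)`. -/
def Psi (J : TensorIdeal C) : Submod (𝟙_ C) where
  carrier X := J.carrier (𝟙_ C) X
  map_mem := by intro X Y f φ hφ; exact J.comp_post f hφ

variable (C) [MonoidalPreadditive C]

/-- The zero tensor ideal. -/
def TensorIdeal.bot : TensorIdeal C where
  carrier _ _ := ⊥
  comp_pre := by
    intro W X Y g f hf
    rw [AddSubgroup.mem_bot] at *
    rw [hf, Limits.comp_zero]
  comp_post := by
    intro X Y Z f h hf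
    rw [AddSubgroup.mem_bot] at *
    rw [hf, Limits.zero_comp]
  whisker_mem := by
    intro Z X Y f hf
    rw [AddSubgroup.mem_bot] at *
    rw [hf, MonoidalPreadditive.whiskerLeft_zero]

end TId

section Thick

variable (C : Type u) [Category.{v} C] [Preadditive C] [MonoidalCategory C]
  [HasBinaryBiproducts C]

/-- A thick left-tensor Ob-ideal: an isomorphism closed class of objects, closed under
direct sums, direct summands, and tensoring on the left by arbitrary objects. -/
structure ThickIdeal where
  carrier : Set C
  iso_mem : ∀ {X Y : C}, (X ≅ Y) → X ∈ carrier → Y ∈ carrier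
  biprod_mem_iff : ∀ X Y : C, ((X ⊞ Y) ∈ carrier ↔ (X ∈ carrier ∧ Y ∈ carrier))
  tensor_mem : ∀ (Y : C) {X : C}, X ∈ carrier → (Y ⊗ X) ∈ carrier

variable {C}

theorem ThickIdeal.ext' {I I' : ThickIdeal C} (h : I.carrier = I'.carrier) : I = I' := by
  cases I; cases I'; cases h; rfl

instance : PartialOrder (ThickIdeal C) where
  le I I' := I.carrier ⊆ I'.carrier
  le_refl I := Set.Subset.refl _
  le_trans I I' I'' h h' := Set.Subset.trans h h'
  le_antisymm I I' h h' := ThickIdeal.ext' (le_antisymm h h')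

/-- The decategorification map `Ob`, sending a tensor ideal `J` to the thick
left-tensor Ob-ideal of objects `X` with `1_X ∈ J(X,X)`. -/
def obIdeal (J : TensorIdeal C) : ThickIdeal C where
  carrier := {X : C | 𝟙 X ∈ J.carrier X X}
  iso_mem := by
    intro X Y e hX
    have h := J.comp_pre e.inv (J.comp_post e.hom hX)
    simpa using h
  biprod_mem_iff := by
    intro X Y
    constructor
    · intro h
      constructor
      · have h1 := J.comp_pre (biprod.inl : X ⟶ X ⊞ Y) (J.comp_post (biprod.fst : X ⊞ Y ⟶ X) h)
        simpa using h1
      · have h1 := J.comp_pre (biprod.inr : Y ⟶ X ⊞ Y) (J.comp_post (biprod.snd : X ⊞ Y ⟶ Y) h)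
        simpa using h1
    · rintro ⟨hX, hY⟩
      have h1 := J.comp_pre (biprod.fst : X ⊞ Y ⟶ X) (J.comp_post (biprod.inl : X ⟶ X ⊞ Y) hX)
      have h2 := J.comp_pre (biprod.snd : X ⊞ Y ⟶ Y) (J.comp_post (biprod.inr : Y ⟶ X ⊞ Y) hY)
      simp only [Category.id_comp] at h1 h2
      have h3 := AddSubgroup.add_mem _ h1 h2
      rw [biprod.total] at h3
      exact h3
  tensor_mem := by
    intro Y X hX
    have h := J.whisker_mem Y hX
    simpa using h

end Thick

section Braided

variable {C : Type u} [Category.{v} C] [MonoidalCategory C] [BraidedCategory C]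

/-- The trace of an endomorphism, with respect to a choice of right duals. -/
def traceMor (D : ∀ X : C, RightDual X) {X : C} (f : X ⟶ X) : 𝟙_ C ⟶ 𝟙_ C :=
  (D X).coev ≫ ((D X).dual ◁ f) ≫ (β_ (D X).dual X).hom ≫ (D X).ev

end Braided


section Auxiliary

variable {C : Type u} [Category.{v} C] [Preadditive C] [MonoidalCategory C]
  [MonoidalPreadditive C] [HasFiniteBiproducts C]

/-- Sliding a global element `g : 𝟙 ⟶ Z ⊗ 𝟙` past a whiskered morphism `Z ◁ φ`. -/
lemma factF {X Z : C} (g : 𝟙_ C ⟶ Z ⊗ 𝟙_ C) (φ : 𝟙_ C ⟶ X) :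
    g ≫ (Z ◁ φ) = φ ≫ (λ_ X).inv ≫ ((g ≫ (ρ_ Z).hom) ▷ X) := by
  have hA : g = (λ_ (𝟙_ C)).inv ≫ ((g ≫ (ρ_ Z).hom) ▷ 𝟙_ C) := by
    rw [MonoidalCategory.unitors_inv_equal, ← rightUnitor_inv_naturality]
    simp
  calc g ≫ (Z ◁ φ)
      = (λ_ (𝟙_ C)).inv ≫ (((g ≫ (ρ_ Z).hom) ▷ 𝟙_ C) ≫ (Z ◁ φ)) := by
        rw [← Category.assoc, ← hA]
    _ = (λ_ (𝟙_ C)).inv ≫ ((𝟙_ C ◁ φ) ≫ ((g ≫ (ρ_ Z).hom) ▷ X)) := by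
        rw [← whisker_exchange]
    _ = ((λ_ (𝟙_ C)).inv ≫ (𝟙_ C ◁ φ)) ≫ ((g ≫ (ρ_ Z).hom) ▷ X) := by
        rw [Category.assoc]
    _ = (φ ≫ (λ_ X).inv) ≫ ((g ≫ (ρ_ Z).hom) ▷ X) := by
        rw [← leftUnitor_inv_naturality]
    _ = φ ≫ (λ_ X).inv ≫ ((g ≫ (ρ_ Z).hom) ▷ X) := by rw [Category.assoc]

variable (C) in
/-- The principal tensor ideal generated by `φ : 𝟙 ⟶ X`. -/
def pIdeal {X : C} (φ : 𝟙_ C ⟶ X) : TensorIdeal C where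
  carrier A B :=
    { carrier := {f | ∃ (Z : C) (a : A ⟶ Z ⊗ 𝟙_ C) (b : Z ⊗ X ⟶ B), f = a ≫ (Z ◁ φ) ≫ b}
      zero_mem' := ⟨𝟙_ C, 0, 0, by simp⟩
      add_mem' := by
        rintro f₁ f₂ ⟨Z₁, a₁, b₁, rfl⟩ ⟨Z₂, a₂, b₂, rfl⟩
        refine ⟨Z₁ ⊞ Z₂, a₁ ≫ (biprod.inl ▷ 𝟙_ C) + a₂ ≫ (biprod.inr ▷ 𝟙_ C),
          (biprod.fst ▷ X) ≫ b₁ + (biprod.snd ▷ X) ≫ b₂, ?_⟩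
        have e₁ : (biprod.inl : Z₁ ⟶ Z₁ ⊞ Z₂) ▷ 𝟙_ C ≫ ((Z₁ ⊞ Z₂) ◁ φ)
            = (Z₁ ◁ φ) ≫ (biprod.inl ▷ X) := (whisker_exchange biprod.inl φ).symm
        have e₂ : (biprod.inr : Z₂ ⟶ Z₁ ⊞ Z₂) ▷ 𝟙_ C ≫ ((Z₁ ⊞ Z₂) ◁ φ)
            = (Z₂ ◁ φ) ≫ (biprod.inr ▷ X) := (whisker_exchange biprod.inr φ).symm
        simp only [Preadditive.add_comp, Preadditive.comp_add, Category.assoc,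
          reassoc_of% e₁, reassoc_of% e₂]
        simp only [← comp_whiskerRight_assoc, biprod.inl_fst, biprod.inl_snd, biprod.inr_fst,
          biprod.inr_snd, id_whiskerRight, Category.id_comp,
          MonoidalPreadditive.zero_whiskerRight, Limits.zero_comp, Limits.comp_zero,
          add_zero, zero_add]
      neg_mem' := by
        rintro f ⟨Z, a, b, rfl⟩
        exact ⟨Z, a, -b, by simp⟩ }
  comp_pre := by
    rintro W A B g f ⟨Z, a, b, rfl⟩
    exact ⟨Z, g ≫ a, b, by simp⟩
  comp_post := by
    rintro A B B' f h ⟨Z, a, b, rfl⟩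
    exact ⟨Z, a, b ≫ h, by simp⟩
  whisker_mem := by
    rintro W A B f ⟨Z, a, b, rfl⟩
    refine ⟨W ⊗ Z, (W ◁ a) ≫ (α_ W Z (𝟙_ C)).inv, (α_ W Z X).hom ≫ (W ◁ b), ?_⟩
    simp only [MonoidalCategory.whiskerLeft_comp, tensor_whiskerLeft_symm, Category.assoc]

lemma mem_pIdeal_self {X : C} (φ : 𝟙_ C ⟶ X) :
    φ ∈ (pIdeal C φ).carrier (𝟙_ C) X :=
  ⟨𝟙_ C, (λ_ (𝟙_ C)).inv, (λ_ X).hom, MonoidalCategory.id_whiskerLeft_symm φ⟩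

open ZeroObject

variable (C) in
/-- The tensor ideal generated by the identity morphisms of objects of `Ob J`. -/
def obGen (J : TensorIdeal C) : TensorIdeal C where
  carrier A B :=
    { carrier := {f | ∃ (Z : C) (a : A ⟶ Z) (b : Z ⟶ B),
        𝟙 Z ∈ J.carrier Z Z ∧ f = a ≫ b}
      zero_mem' := ⟨0, 0, 0, by
        rw [Limits.id_zero]; exact (J.carrier 0 0).zero_mem, by simp⟩
      add_mem' := by
        rintro f₁ f₂ ⟨Z₁, a₁, b₁, h₁, rfl⟩ ⟨Z₂, a₂, b₂, h₂, rfl⟩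
        refine ⟨Z₁ ⊞ Z₂, biprod.lift a₁ a₂, biprod.desc b₁ b₂, ?_, by simp⟩
        have m₁ := J.comp_pre (biprod.fst : Z₁ ⊞ Z₂ ⟶ Z₁)
          (J.comp_post (biprod.inl : Z₁ ⟶ Z₁ ⊞ Z₂) h₁)
        have m₂ := J.comp_pre (biprod.snd : Z₁ ⊞ Z₂ ⟶ Z₂)
          (J.comp_post (biprod.inr : Z₂ ⟶ Z₁ ⊞ Z₂) h₂)
        simp only [Category.id_comp] at m₁ m₂
        have := AddSubgroup.add_mem _ m₁ m₂
        rwa [biprod.total] at this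
      neg_mem' := by
        rintro f ⟨Z, a, b, h, rfl⟩
        exact ⟨Z, a, -b, h, by simp⟩ }
  comp_pre := by
    rintro W A B g f ⟨Z, a, b, h, rfl⟩
    exact ⟨Z, g ≫ a, b, h, by simp⟩
  comp_post := by
    rintro A B B' f h' ⟨Z, a, b, h, rfl⟩
    exact ⟨Z, a, b ≫ h', h, by simp⟩
  whisker_mem := by
    rintro W A B f ⟨Z, a, b, h, rfl⟩
    refine ⟨W ⊗ Z, W ◁ a, W ◁ b, ?_, by rw [← MonoidalCategory.whiskerLeft_comp]⟩
    have := J.whisker_mem W h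
    rwa [MonoidalCategory.whiskerLeft_id] at this

/-- The key lemma: if the decategorification map reflects the order, then for nonzero
`φ : 𝟙 ⟶ X` with `X` having local endomorphism ring, every `ψ : 𝟙 ⟶ X` factors as
`ψ = φ ≫ e`. -/
lemma key {X : C}
    (hord : ∀ J K : TensorIdeal C, J ≤ K ↔ obIdeal J ≤ obIdeal K)
    (hloc : IsLocalRing (End X))
    {φ : 𝟙_ C ⟶ X} (hφ : φ ≠ 0) (ψ : 𝟙_ C ⟶ X) : ∃ e : X ⟶ X, ψ = φ ≫ e := by
  set J := pIdeal C φ with hJ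
  set K := obGen C J with hK
  -- `J ≤ K` since they have the same objects.
  have hJK : J ≤ K := by
    rw [hord]
    intro Y hY
    exact ⟨Y, 𝟙 Y, 𝟙 Y, hY, by simp⟩
  -- hence `φ` factors through an object `Z` with `𝟙 Z ∈ J`.
  obtain ⟨Z, a, b, hZ, hab⟩ := hJK _ _ (mem_pIdeal_self φ)
  -- unfold the membership `𝟙 Z ∈ J`.
  obtain ⟨Z', a', b', hZ'⟩ := hZ
  -- the splitting `t : X ⟶ Z` with `φ ≫ t = a`.
  set t : X ⟶ Z := (λ_ X).inv ≫ (((a ≫ a') ≫ (ρ_ Z').hom) ▷ X) ≫ b' with ht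
  have hφt : φ ≫ t = a := by
    have hfF := factF (a ≫ a') φ
    calc φ ≫ t = (φ ≫ (λ_ X).inv ≫ (((a ≫ a') ≫ (ρ_ Z').hom) ▷ X)) ≫ b' := by
          simp [ht]
    _ = ((a ≫ a') ≫ (Z' ◁ φ)) ≫ b' := by rw [← hfF]
    _ = a ≫ (a' ≫ (Z' ◁ φ) ≫ b') := by simp
    _ = a := by rw [← hZ']; simp
  set e₀ : X ⟶ X := t ≫ b with he₀def
  have he₀ : φ ≫ e₀ = φ := by
    rw [he₀def, ← Category.assoc, hφt, ← hab]
  -- `e₀` is a unit in `End X`.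
  have hzero : φ ≫ (𝟙 X - e₀) = 0 := by
    rw [Preadditive.comp_sub, Category.comp_id, he₀, sub_self]
  haveI := hloc
  have hunit : IsUnit (End.of e₀) := by
    have hsum : End.of e₀ + (1 - End.of e₀) = 1 := by abel
    rcases IsLocalRing.isUnit_or_isUnit_of_add_one hsum with h | h
    · exact h
    · exfalso
      obtain ⟨u, hu⟩ := h
      apply hφ
      have hmor : (𝟙 X - e₀) ≫ ((u⁻¹ : (End X)ˣ) : End X) = 𝟙 X := by
        show ((u⁻¹ : (End X)ˣ) : End X) * (1 - End.of e₀) = 1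
        rw [← hu, Units.inv_mul]
      calc φ = φ ≫ 𝟙 X := by simp
      _ = φ ≫ ((𝟙 X - e₀) ≫ ((u⁻¹ : (End X)ˣ) : End X)) := by rw [hmor]
      _ = (φ ≫ (𝟙 X - e₀)) ≫ ((u⁻¹ : (End X)ˣ) : End X) := by
            rw [Category.assoc]
      _ = 0 := by rw [hzero, Limits.zero_comp]
  -- push `ψ` through the factorization.
  have hψt : ψ ≫ t = φ ≫ ((λ_ X).inv ≫ ((((ψ ≫ t) ≫ a') ≫ (ρ_ Z').hom) ▷ X) ≫ b') := by
    have hfF := factF ((ψ ≫ t) ≫ a') φ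
    calc ψ ≫ t = (ψ ≫ t) ≫ 𝟙 Z := by simp
    _ = (ψ ≫ t) ≫ (a' ≫ (Z' ◁ φ) ≫ b') := by rw [← hZ']
    _ = (((ψ ≫ t) ≫ a') ≫ (Z' ◁ φ)) ≫ b' := by simp
    _ = (φ ≫ (λ_ X).inv ≫ ((((ψ ≫ t) ≫ a') ≫ (ρ_ Z').hom) ▷ X)) ≫ b' := by rw [hfF]
    _ = _ := by simp
  obtain ⟨u, hu⟩ := hunit
  have hmor : e₀ ≫ ((u⁻¹ : (End X)ˣ) : End X) = 𝟙 X := by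
    show ((u⁻¹ : (End X)ˣ) : End X) * End.of e₀ = 1
    rw [← hu, Units.inv_mul]
  refine ⟨((λ_ X).inv ≫ ((((ψ ≫ t) ≫ a') ≫ (ρ_ Z').hom) ▷ X) ≫ b') ≫ b
      ≫ ((u⁻¹ : (End X)ˣ) : End X), ?_⟩
  calc ψ = ψ ≫ 𝟙 X := by simp
  _ = ψ ≫ e₀ ≫ ((u⁻¹ : (End X)ˣ) : End X) := by rw [← hmor]
  _ = (ψ ≫ t) ≫ b ≫ ((u⁻¹ : (End X)ˣ) : End X) := by
        rw [he₀def]; simp only [Category.assoc]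
  _ = _ := by conv_lhs => rw [hψt]
              simp only [Category.assoc]

end Auxiliary

section Statement

variable (C : Type u) [Category.{v} C] [Preadditive C] [MonoidalCategory C]
  [MonoidalPreadditive C] [HasFiniteBiproducts C]

/-- **Corollary.** Let `C` satisfy (I)-(IV) (right rigid, Krull-Schmidt, `k = C(𝟙,𝟙)` a
field, hom-spaces finitely generated over `k`), with `k` algebraically closed.  If
there is an indecomposable `X` with `C(𝟙,X) ≠ 0` and `dim_k C(𝟙,X) > 1`, then the
decategorification map `Ob : TId(C) → Id([C]_⊕)` is not an isomorphism. -/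
theorem dim_gt_one_implies_Ob_not_iso
    (k : Type*) [Field k] [IsAlgClosed k] [CategoryTheory.Linear k C]
    (hk : Function.Bijective (fun a : k => a • (𝟙 (𝟙_ C))))
    (hfg : ∀ X Y : C, Module.Finite k (X ⟶ Y))
    (hrigid : ∀ X : C, Nonempty (RightDual X)) (hKS : IsKrullSchmidt C)
    (X : C) (hXind : Indecomposable X) (hXB : ∃ φ : 𝟙_ C ⟶ X, φ ≠ 0)
    (hdim : 1 < Module.finrank k (𝟙_ C ⟶ X)) :
    ¬ (Function.Bijective (obIdeal (C := C)) ∧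
        ∀ J K : TensorIdeal C, J ≤ K ↔ obIdeal J ≤ obIdeal K) := by
  rintro ⟨-, hord⟩
  obtain ⟨φ, hφ⟩ := hXB
  have hloc : IsLocalRing (End X) := hKS.local_end X hXind
  haveI := hloc
  haveI : FiniteDimensional k (X ⟶ X) := hfg X X
  haveI : FiniteDimensional k (End X) := hfg X X
  -- one-sided inverses in `End X` are two-sided.
  have hU1 : ∀ u v : X ⟶ X, u ≫ v = 𝟙 X → v ≫ u = 𝟙 X := by
    intro u v huv
    let L : (X ⟶ X) →ₗ[k] (X ⟶ X) :=
      { toFun := fun f => u ≫ f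
        map_add' := fun f g => Preadditive.comp_add _ _ _ _ _ _
        map_smul' := fun c f => Linear.comp_smul _ _ _ _ _ _ }
    have hsurj : Function.Surjective L := by
      intro y
      exact ⟨v ≫ y, by simp only [L, LinearMap.coe_mk, AddHom.coe_mk, ← Category.assoc, huv,
        Category.id_comp]⟩
    have hinj : Function.Injective L := (LinearMap.injective_iff_surjective).2 hsurj
    apply hinj
    simp only [L, LinearMap.coe_mk, AddHom.coe_mk, ← Category.assoc, huv,
      Category.id_comp, Category.comp_id]
  -- every `ψ : 𝟙 ⟶ X` is a scalar multiple of `φ`.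
  have hspan : ∀ ψ : 𝟙_ C ⟶ X, ∃ c : k, c • φ = ψ := by
    intro ψ
    obtain ⟨e, he⟩ := key hord hloc hφ ψ
    obtain ⟨c, hc⟩ := spectrum.nonempty_of_isAlgClosed_of_finiteDimensional k (End.of e)
    rw [spectrum.mem_iff] at hc
    set n : End X := End.of e - algebraMap k (End X) c with hn
    have hcn : algebraMap k (End X) c - End.of e = -n := by rw [hn]; abel
    rw [hcn] at hc
    have hnnu : ¬ IsUnit n := fun h => hc h.neg
    -- `φ ≫ n = 0`.
    have hn0 : φ ≫ (n : X ⟶ X) = 0 := by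
      by_contra hne
      obtain ⟨e', he'⟩ := key hord hloc hne φ
      -- `φ ≫ (𝟙 - n ≫ e') = 0`
      have h3 : φ ≫ (𝟙 X - (n : X ⟶ X) ≫ e') = 0 := by
        rw [Preadditive.comp_sub, Category.comp_id, ← Category.assoc, ← he', sub_self]
      -- `e' * n` is not a unit
      have hmulnu : ¬ IsUnit (End.of e' * n) := by
        intro h
        obtain ⟨u, hu⟩ := h
        apply hnnu
        have h1 : (((u⁻¹ : (End X)ˣ) : End X) * End.of e') * n = 1 := by
          rw [mul_assoc, ← hu, Units.inv_mul]
        have h2 : n * (((u⁻¹ : (End X)ˣ) : End X) * End.of e') = 1 := by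
          exact hU1 _ _ h1
        exact isUnit_iff_exists.2 ⟨_, h2, h1⟩
      have hsum : ((1 : End X) - End.of e' * n) + End.of e' * n = 1 := by abel
      rcases IsLocalRing.isUnit_or_isUnit_of_add_one hsum with h | h
      · -- then `φ = 0`, contradiction
        obtain ⟨u, hu⟩ := h
        apply hφ
        have hmor : (𝟙 X - (n : X ⟶ X) ≫ e') ≫ ((u⁻¹ : (End X)ˣ) : End X) = 𝟙 X := by
          show ((u⁻¹ : (End X)ˣ) : End X) * ((1 : End X) - End.of e' * n) = 1
          rw [← hu, Units.inv_mul]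
        calc φ = φ ≫ 𝟙 X := by simp
        _ = φ ≫ ((𝟙 X - (n : X ⟶ X) ≫ e') ≫ ((u⁻¹ : (End X)ˣ) : End X)) := by
              rw [hmor]
        _ = (φ ≫ (𝟙 X - (n : X ⟶ X) ≫ e')) ≫ ((u⁻¹ : (End X)ˣ) : End X) := by
              rw [Category.assoc]
        _ = 0 := by rw [h3, Limits.zero_comp]
      · exact absurd h hmulnu
    -- conclude `ψ = c • φ`
    refine ⟨c, ?_⟩
    have hedecomp : e = c • 𝟙 X + (show X ⟶ X from n) := by
      show End.of e = c • (1 : End X) + (End.of e - algebraMap k (End X) c)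
      rw [← Algebra.algebraMap_eq_smul_one]
      abel
    rw [he, hedecomp, Preadditive.comp_add, hn0, add_zero, Linear.comp_smul, Category.comp_id]
  have hle : Module.finrank k (𝟙_ C ⟶ X) ≤ 1 := by
    exact finrank_le_one φ hspan
  omega

end Statement

end TIP
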